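/- Let g be a simple Lie algebra (of arbitrary dimension) over an arbitrary field and let x ∈ g be nonzero. Then the rank of the adjoint map ad x : g → g, y ↦ [x,y], is at least 2; equivalently, there exist y, z ∈ g such that [x,y] and [x,z] are linearly independent. -/

import Mathlib

/-- In a simple Lie algebra (of arbitrary dimension) over an arbitrary
field, every nonzero `x` has `rk(ad x) ≥ 2`: there exist `y, z` with `[x,y]` and
`[x,z]` linearly independent. -/
theorem stmt13 (F : Type*) [Field F]
    (L : Type*) [LieRing L] [LieAlgebra F L] [LieAlgebra.IsSimple F L]
    (x : L) (hx : x ≠ 0) :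
    ∃ y z : L, LinearIndependent F ![⁅x, y⁆, ⁅x, z⁆] := by
  by_contra hcon
  push_neg at hcon
  -- Step 1: `x` is not central.
  have hex : ∃ y₀ : L, ⁅x, y₀⁆ ≠ 0 := by
    by_contra h
    push_neg at h
    let J : LieIdeal F L :=
      { toSubmodule := Submodule.span F {x}
        lie_mem := by
          intro a m hm
          rcases Submodule.mem_span_singleton.mp hm with ⟨c, rfl⟩
          have : ⁅a, c • x⁆ = 0 := by
            rw [lie_smul, ← lie_skew, h a, neg_zero, smul_zero]
          rw [this]
          exact Submodule.zero_mem _ }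
    have hJx : x ∈ J := Submodule.mem_span_singleton_self x
    have hJtop : J = ⊤ := by
      rcases LieAlgebra.IsSimple.eq_bot_or_eq_top J with hb | ht
      · exfalso
        rw [hb] at hJx
        exact hx ((LieSubmodule.mem_bot x).mp hJx)
      · exact ht
    have habel : IsLieAbelian L := by
      constructor
      intro a b
      have haJ : a ∈ J := by rw [hJtop]; exact LieSubmodule.mem_top a
      rcases Submodule.mem_span_singleton.mp haJ with ⟨c, rfl⟩
      rw [smul_lie, h b, smul_zero]
    exact LieAlgebra.IsSimple.non_abelian (R := F) habel
  obtain ⟨y₀, hv⟩ := hex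
  set v : L := ⁅x, y₀⁆ with hv_def
  -- Step 2: every bracket `⁅x, y⁆` is a multiple of `v`.
  have hdep : ∀ y : L, ∃ c : F, ⁅x, y⁆ = c • v := by
    intro y
    have h := hcon y y₀
    rw [linearIndependent_fin2] at h
    push_neg at h
    simp only [Matrix.cons_val_one, Matrix.head_cons, Matrix.cons_val_zero] at h
    rcases h hv with ⟨c, hc⟩
    exact ⟨c, hc.symm⟩
  choose φ hφ using hdep
  have hinj : ∀ c d : F, c • v = d • v → c = d := by
    intro c d hcd
    by_contra hne
    have h2 : (c - d) • v = 0 := by rw [sub_smul, hcd, sub_self]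
    rcases smul_eq_zero.mp h2 with h3 | h3
    · exact hne (sub_eq_zero.mp h3)
    · exact hv h3
  -- the linear functional `f` with `⁅x, y⁆ = f y • v`
  let f : L →ₗ[F] F :=
    { toFun := φ
      map_add' := by
        intro a b
        apply hinj
        rw [← hφ (a + b), lie_add, hφ a, hφ b, add_smul]
      map_smul' := by
        intro c a
        apply hinj
        rw [← hφ (c • a), lie_smul, hφ a, smul_smul, RingHom.id_apply, smul_eq_mul] }
  have hbr : ∀ y : L, ⁅x, y⁆ = f y • v := hφ
  have hfz0 : f y₀ = 1 := by
    apply hinj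
    show φ y₀ • v = 1 • v
    rw [← hφ y₀, one_smul]
  -- the operator `R : y ↦ ⁅y, y₀⁆`
  set R : Module.End F L := -(LieAlgebra.ad F L y₀) with hRdef
  have hR : ∀ y : L, R y = ⁅y, y₀⁆ := by
    intro y
    rw [hRdef]
    show -((LieAlgebra.ad F L y₀) y) = ⁅y, y₀⁆
    rw [LieAlgebra.ad_apply]
    exact lie_skew y y₀
  have hu : ∀ i j : ℕ, (R ^ i) ((R ^ j) v) = (R ^ (i + j)) v := by
    intro i j
    rw [← Module.End.mul_apply, ← pow_add]
  -- the basic identity for `⁅v, y⁆`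
  have hB0 : ∀ y : L, ⁅v, y⁆ = f y • (R v) - f (R y) • v := by
    intro y
    have h := leibniz_lie x y y₀
    rw [hbr ⁅y, y₀⁆, hbr y, smul_lie, ← hv_def, ← hR v] at h
    -- h : f ⁅y, y₀⁆ • v = f y • R v + ⁅y, v⁆
    have h2 : ⁅y, v⁆ = f ⁅y, y₀⁆ • v - f y • R v := by rw [h]; abel
    rw [hR y]
    rw [← lie_skew v y, h2]
    abel
  -- the span of the orbit of `v` under `R`
  set W : Submodule F L := Submodule.span F (Set.range fun n : ℕ => (R ^ n) v) with hWdef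
  have hmemW : ∀ n : ℕ, (R ^ n) v ∈ W := fun n => Submodule.subset_span ⟨n, rfl⟩
  have hvW : v ∈ W := by
    have := hmemW 0
    rwa [pow_zero, Module.End.one_apply] at this
  have hRW : ∀ w ∈ W, R w ∈ W := by
    intro w hw
    have h1 : W.map R ≤ W := by
      rw [hWdef, Submodule.map_span]
      apply Submodule.span_le.mpr
      rintro _ ⟨_, ⟨n, rfl⟩, rfl⟩
      have h2 : R ((R ^ n) v) = (R ^ (n + 1)) v := by
        rw [← Module.End.mul_apply, ← pow_succ']
      rw [h2]
      exact hmemW (n + 1)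
    exact h1 ⟨w, hw, rfl⟩
  -- key stability lemma
  have hkey : ∀ (n : ℕ) (y : L), ⁅(R ^ n) v, y⁆ ∈ W := by
    intro n
    induction n with
    | zero =>
      intro y
      rw [pow_zero, Module.End.one_apply, hB0 y]
      refine sub_mem (Submodule.smul_mem _ _ ?_) (Submodule.smul_mem _ _ hvW)
      have := hmemW 1
      rwa [pow_one] at this
    | succ n ih =>
      intro y
      have h3 : ⁅(R ^ n) v, y₀⁆ = (R ^ (n + 1)) v := by
        rw [← hR, ← Module.End.mul_apply, ← pow_succ']
      have h := leibniz_lie ((R ^ n) v) y₀ y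
      rw [h3] at h
      have h2 : ⁅(R ^ (n + 1)) v, y⁆ =
          ⁅(R ^ n) v, ⁅y₀, y⁆⁆ - ⁅y₀, ⁅(R ^ n) v, y⁆⁆ := by
        rw [h]; abel
      rw [h2]
      refine sub_mem (ih _) ?_
      have h5 : R ⁅(R ^ n) v, y⁆ ∈ W := hRW _ (ih y)
      have h6 : ⁅y₀, ⁅(R ^ n) v, y⁆⁆ = -(R ⁅(R ^ n) v, y⁆) := by
        rw [hR]
        exact (lie_skew _ _).symm
      rw [h6]
      exact neg_mem h5
  -- `W` is an ideal
  have hyW : ∀ (y w : L), w ∈ W → ⁅y, w⁆ ∈ W := by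
    intro y w hw
    have h1 : W.map ((LieAlgebra.ad F L y : Module.End F L) : L →ₗ[F] L) ≤ W := by
      rw [hWdef, Submodule.map_span]
      apply Submodule.span_le.mpr
      rintro _ ⟨_, ⟨n, rfl⟩, rfl⟩
      have h2 : (LieAlgebra.ad F L y) ((R ^ n) v) = -⁅(R ^ n) v, y⁆ := by
        rw [LieAlgebra.ad_apply]
        exact (lie_skew _ _).symm
      rw [h2]
      exact neg_mem (hkey n _)
    have := h1 ⟨w, hw, rfl⟩
    rwa [LieAlgebra.ad_apply] at this
  let I : LieIdeal F L := { toSubmodule := W, lie_mem := fun {a m} hm => hyW a m hm }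
  have hIbot : I ≠ ⊥ := by
    intro hbot
    apply hv
    have hmem : v ∈ I := hvW
    rw [hbot] at hmem
    exact (LieSubmodule.mem_bot v).mp hmem
  have hItop : I = ⊤ := (LieAlgebra.IsSimple.eq_bot_or_eq_top I).resolve_left hIbot
  have hz0W : y₀ ∈ W := by
    have hmem : y₀ ∈ I := by rw [hItop]; exact LieSubmodule.mem_top y₀
    exact hmem
  have hxW : x ∈ W := by
    have hmem : x ∈ I := by rw [hItop]; exact LieSubmodule.mem_top x
    exact hmem
  rw [hWdef] at hz0W hxW
  obtain ⟨b, hb⟩ := Finsupp.mem_span_range_iff_exists_finsupp.mp hz0W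
  obtain ⟨e, he⟩ := Finsupp.mem_span_range_iff_exists_finsupp.mp hxW
  -- expansion lemma
  have expand : ∀ (c : ℕ →₀ F) (i : ℕ),
      f ((R ^ i) (c.sum fun j t => t • (R ^ j) v)) =
        c.sum fun j t => t * f ((R ^ (i + j)) v) := by
    intro c i
    rw [map_finsuppSum, map_finsuppSum]
    refine Finsupp.sum_congr fun j _ => ?_
    rw [map_smul, map_smul, smul_eq_mul, hu i j]
  -- moments of `y₀` and of `x`
  have hmz : ∀ i : ℕ, f ((R ^ (i + 1)) y₀) = 0 := by
    intro i
    have h1 : R y₀ = 0 := by rw [hR]; exact lie_self y₀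
    rw [pow_succ, Module.End.mul_apply, h1, map_zero, map_zero]
  have hRx : R x = v := by rw [hR]
  have hmx : ∀ i : ℕ, f ((R ^ (i + 1)) x) = f ((R ^ i) v) := by
    intro i
    rw [pow_succ, Module.End.mul_apply, hRx]
  -- the double sum, computed in two ways
  have hS1 : (b.sum fun j t => t * f ((R ^ (j + 1)) x)) = 1 := by
    have h1 : (b.sum fun j t => t * f ((R ^ (j + 1)) x)) =
        b.sum fun j t => t * f ((R ^ (0 + j)) v) := by
      refine Finsupp.sum_congr fun j _ => ?_
      rw [hmx j, zero_add]
    rw [h1]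
    have h2 := expand b 0
    rw [hb, pow_zero, Module.End.one_apply, hfz0] at h2
    exact h2.symm
  have hS2 : (e.sum fun k s => s * f ((R ^ (k + 1)) y₀)) = 0 := by
    have h1 : (e.sum fun k s => s * f ((R ^ (k + 1)) y₀)) =
        e.sum fun _ _ => (0 : F) := by
      refine Finsupp.sum_congr fun k _ => ?_
      rw [hmz k, mul_zero]
    rw [h1, Finsupp.sum, Finset.sum_const_zero]
  have hswap : (b.sum fun j t => t * f ((R ^ (j + 1)) x)) =
      e.sum fun k s => s * f ((R ^ (k + 1)) y₀) := by
    have hx' : ∀ j : ℕ, f ((R ^ (j + 1)) x) =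
        e.sum fun k s => s * f ((R ^ (j + 1 + k)) v) := by
      intro j
      have h := expand e (j + 1)
      rw [he] at h
      exact h
    have hz' : ∀ k : ℕ, f ((R ^ (k + 1)) y₀) =
        b.sum fun j t => t * f ((R ^ (k + 1 + j)) v) := by
      intro k
      have h := expand b (k + 1)
      rw [hb] at h
      exact h
    calc (b.sum fun j t => t * f ((R ^ (j + 1)) x))
        = b.sum fun j t => e.sum fun k s => t * (s * f ((R ^ (j + 1 + k)) v)) := by
          refine Finsupp.sum_congr fun j _ => ?_
          rw [hx' j, Finsupp.mul_sum]
      _ = e.sum fun k s => b.sum fun j t => t * (s * f ((R ^ (j + 1 + k)) v)) :=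
          Finsupp.sum_comm b e _
      _ = e.sum fun k s => b.sum fun j t => s * (t * f ((R ^ (k + 1 + j)) v)) := by
          refine Finsupp.sum_congr fun k _ => Finsupp.sum_congr fun j _ => ?_
          have hind : j + 1 + k = k + 1 + j := by omega
          rw [hind, mul_left_comm]
      _ = e.sum fun k s => s * (b.sum fun j t => t * f ((R ^ (k + 1 + j)) v)) := by
          refine Finsupp.sum_congr fun k _ => ?_
          rw [Finsupp.mul_sum]
      _ = e.sum fun k s => s * f ((R ^ (k + 1)) y₀) := by
          refine Finsupp.sum_congr fun k _ => ?_
          rw [hz' k]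
  rw [hS1, hS2] at hswap
  exact one_ne_zero hswap
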